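/- arXiv:1409.1160 — 4 statements merged into one kernel-verified Lean document; each statement's English description precedes it below -/
import Mathlib

section
/- Let a : ℕ → ℝ be a sequence with a_n > 0 for all n, and suppose a is an arithmetic progression of order h ≥ 0. Then a is eventually increasing: there exists n₀ such that a_n ≤ a_{n+1} for all n ≥ n₀. Moreover, if a is not constant, then a_n → ∞ as n → ∞. -/
open Filter fwdDiff

/-- `a` is an arithmetic progression of order `h` (real sequences). -/
def IsAPOfOrder (a : ℕ → ℝ) (h : ℕ) : Prop :=
  ∀ n : ℕ, ∑ k ∈ Finset.range (h + 2), (-1 : ℝ) ^ (h + 1 - k) * ((h + 1).choose k) * a (n + k) = 0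

private lemma aux_linear (b : ℕ → ℝ) (c : ℝ) (hc : ∀ n, b (n + 1) - b n = c) :
    ∀ n, b n = b 0 + n * c := by
  intro n
  induction n with
  | zero => simp
  | succ n ih =>
    have := hc n
    push_cast
    nlinarith [hc n]

private lemma aux_trichotomy (m : ℕ) : ∀ b : ℕ → ℝ, (∀ n, (Δ_[1])^[m] b n = 0) →
    (∀ n, b n = b 0) ∨
    (Tendsto b atTop atTop ∧ ∃ N, ∀ n ≥ N, b n < b (n + 1)) ∨
    (Tendsto b atTop atBot ∧ ∃ N, ∀ n ≥ N, b (n + 1) < b n) := by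
  induction m with
  | zero =>
    intro b hb
    left
    intro n
    simpa using (hb n).trans (hb 0).symm
  | succ m ih =>
    intro b hb
    have hb' : ∀ n, (Δ_[1])^[m] (Δ_[1] b) n = 0 := by
      intro n
      have := hb n
      rwa [Function.iterate_succ_apply] at this
    rcases ih (Δ_[1] b) hb' with hconst | ⟨htop, -⟩ | ⟨hbot, -⟩
    · -- Δ b is constant
      set c : ℝ := Δ_[1] b 0 with hc
      have hdiff : ∀ n, b (n + 1) - b n = c := fun n => hconst n
      have hlin := aux_linear b c hdiff
      rcases lt_trichotomy c 0 with hlt | heq | hgt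
      · right; right
        constructor
        · have h1 : Tendsto (fun n : ℕ => b 0 + (n : ℝ) * c) atTop atBot := by
            apply tendsto_atBot_add_const_left
            exact (tendsto_natCast_atTop_atTop (R := ℝ)).atTop_mul_const_of_neg hlt
          exact h1.congr (fun n => (hlin n).symm)
        · exact ⟨0, fun n _ => by nlinarith [hdiff n]⟩
      · left
        intro n
        rw [hlin n, heq, mul_zero, add_zero]
      · right; left
        constructor
        · have h1 : Tendsto (fun n : ℕ => b 0 + (n : ℝ) * c) atTop atTop := by
            apply tendsto_atTop_add_const_left
            exact (tendsto_natCast_atTop_atTop (R := ℝ)).atTop_mul_const hgt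
          exact h1.congr (fun n => (hlin n).symm)
        · exact ⟨0, fun n _ => by nlinarith [hdiff n]⟩
    · -- Δ b → ∞
      obtain ⟨N, hN⟩ := (htop.eventually (eventually_ge_atTop (1 : ℝ))).exists_forall_of_atTop
      have hstep : ∀ n ≥ N, b n + 1 ≤ b (n + 1) := by
        intro n hn
        have := hN n hn
        simp only [fwdDiff] at this
        linarith
      have hgrow : ∀ n ≥ N, b N + (n - N : ℕ) ≤ b n := by
        intro n hn
        induction n, hn using Nat.le_induction with
        | base => simp
        | succ n hn ih =>
          have h1 := hstep n hn
          have h2 : ((n + 1 - N : ℕ) : ℝ) = ((n - N : ℕ) : ℝ) + 1 := by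
            have : n + 1 - N = (n - N) + 1 := by omega
            rw [this]; push_cast; ring
          rw [h2]; linarith
      right; left
      constructor
      · apply tendsto_atTop_mono' _ _
          ((tendsto_atTop_add_const_left atTop (b N - N)
            (tendsto_natCast_atTop_atTop (R := ℝ))) : Tendsto (fun n : ℕ => b N - N + n) atTop atTop)
        filter_upwards [eventually_ge_atTop N] with n hn
        have := hgrow n hn
        have h2 : ((n - N : ℕ) : ℝ) = (n : ℝ) - N := by
          push_cast [Nat.cast_sub hn]; ring
        rw [h2] at this
        linarith
      · exact ⟨N, fun n hn => by linarith [hstep n hn]⟩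
    · -- Δ b → -∞
      obtain ⟨N, hN⟩ := (hbot.eventually (eventually_le_atBot (-1 : ℝ))).exists_forall_of_atTop
      have hstep : ∀ n ≥ N, b (n + 1) ≤ b n - 1 := by
        intro n hn
        have := hN n hn
        simp only [fwdDiff] at this
        linarith
      have hgrow : ∀ n ≥ N, b n ≤ b N - (n - N : ℕ) := by
        intro n hn
        induction n, hn using Nat.le_induction with
        | base => simp
        | succ n hn ih =>
          have h1 := hstep n hn
          have h2 : ((n + 1 - N : ℕ) : ℝ) = ((n - N : ℕ) : ℝ) + 1 := by
            have : n + 1 - N = (n - N) + 1 := by omega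
            rw [this]; push_cast; ring
          rw [h2]; linarith
      right; right
      constructor
      · have hneg : Tendsto (fun n : ℕ => -(n : ℝ)) atTop atBot := by
          rw [tendsto_neg_atBot_iff]
          exact tendsto_natCast_atTop_atTop
        have hmaj : Tendsto (fun n : ℕ => b N + (N : ℝ) + -(n : ℝ)) atTop atBot :=
          tendsto_atBot_add_const_left atTop (b N + (N : ℝ)) hneg
        apply tendsto_atBot_mono' _ _ hmaj
        filter_upwards [eventually_ge_atTop N] with n hn
        have := hgrow n hn
        have h2 : ((n - N : ℕ) : ℝ) = (n : ℝ) - N := by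
          push_cast [Nat.cast_sub hn]; ring
        rw [h2] at this
        linarith
      · exact ⟨N, fun n hn => by linarith [hstep n hn]⟩

theorem stmt_12 (a : ℕ → ℝ) (h : ℕ) (hpos : ∀ n, 0 < a n) (ha : IsAPOfOrder a h) :
    (∃ n₀ : ℕ, ∀ n ≥ n₀, a n ≤ a (n + 1)) ∧
    (¬ (∃ c : ℝ, ∀ n, a n = c) → Filter.Tendsto a Filter.atTop Filter.atTop) := by
  have H : ∀ n, (Δ_[1])^[h + 1] a n = 0 := by
    intro n
    rw [fwdDiff_iter_eq_sum_shift]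
    rw [← ha n]
    apply Finset.sum_congr rfl
    intro k _
    push_cast [zsmul_eq_mul, smul_eq_mul, mul_one]
    ring
  rcases aux_trichotomy (h + 1) a H with hconst | ⟨htop, N, hN⟩ | ⟨hbot, -⟩
  · refine ⟨⟨0, fun n _ => ?_⟩, fun hnc => absurd ⟨a 0, hconst⟩ hnc⟩
    rw [hconst n, hconst (n + 1)]
  · exact ⟨⟨N, fun n hn => (hN n hn).le⟩, fun _ => htop⟩
  · exfalso
    obtain ⟨n, hn⟩ := (hbot.eventually (eventually_lt_atBot (0 : ℝ))).exists
    exact absurd (hpos n) (not_lt.mpr hn.le)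
end

section
/- Let a : ℕ → ℝ be a positive sequence, let q, r > 0 be real numbers and k, h ≥ 0 integers. If a^q is an arithmetic progression of strict order k and a^r is an arithmetic progression of strict order h, then a^{q+r} is an arithmetic progression of strict order k + h. -/
open Finset Function fwdDiff

/-- `a` is an arithmetic progression of strict order `h`. -/
def IsAPOfStrictOrder (a : ℕ → ℝ) (h : ℕ) : Prop :=
  IsAPOfOrder a h ∧ (h = 0 ∨ ¬ IsAPOfOrder a (h - 1))

lemma fd_eval (b : ℕ → ℝ) (m n : ℕ) :
    (fwdDiff 1)^[m] b n = ∑ k ∈ Finset.range (m + 1), (-1 : ℝ) ^ (m - k) * (m.choose k) * b (n + k) := by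
  rw [fwdDiff_iter_eq_sum_shift]
  refine Finset.sum_congr rfl fun k _ => ?_
  have : k • (1 : ℕ) = k := by simp
  rw [this, zsmul_eq_mul]
  push_cast
  ring

lemma order_iff (b : ℕ → ℝ) (h : ℕ) :
    IsAPOfOrder b h ↔ ∀ n, (fwdDiff 1)^[h + 1] b n = 0 := by
  constructor
  · intro H n; rw [fd_eval]; exact H n
  · intro H n; rw [← fd_eval]; exact H n

lemma fd_shift (f : ℕ → ℝ) (j : ℕ) (x : ℕ) :
    (fwdDiff 1)^[j] (fun n => f (n + 1)) x = (fwdDiff 1)^[j] f (x + 1) := by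
  induction j generalizing f x with
  | zero => simp
  | succ j ih =>
    rw [Function.iterate_succ_apply, Function.iterate_succ_apply]
    have : (fwdDiff 1) (fun n => f (n + 1)) = fun n => (fwdDiff 1) f (n + 1) := rfl
    rw [this, ih]

lemma fd_mul (f g : ℕ → ℝ) :
    (fwdDiff 1) (f * g) = (fun n => f (n + 1)) * (fwdDiff 1) g + (fwdDiff 1) f * g := by
  funext x
  simp only [fwdDiff, Pi.mul_apply, Pi.add_apply]
  ring

/-- Discrete Leibniz rule for iterated forward differences. -/
lemma fd_leibniz (f g : ℕ → ℝ) (m : ℕ) (n : ℕ) :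
    (fwdDiff 1)^[m] (f * g) n =
      ∑ j ∈ Finset.range (m + 1),
        (m.choose j : ℝ) * (fwdDiff 1)^[j] f (n + (m - j)) * (fwdDiff 1)^[m - j] g n := by
  induction m generalizing f g n with
  | zero => simp
  | succ m ih =>
    rw [Function.iterate_succ_apply, fd_mul]
    have hadd : (fwdDiff 1)^[m] ((fun n => f (n + 1)) * (fwdDiff 1) g + (fwdDiff 1) f * g) n
        = (fwdDiff 1)^[m] ((fun n => f (n + 1)) * (fwdDiff 1) g) n + (fwdDiff 1)^[m] ((fwdDiff 1) f * g) n := by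
      rw [fwdDiff_iter_add]; rfl
    rw [hadd, ih, ih]
    -- rewrite first sum
    have h1 : ∑ j ∈ Finset.range (m + 1),
        (m.choose j : ℝ) * (fwdDiff 1)^[j] (fun n => f (n + 1)) (n + (m - j)) * (fwdDiff 1)^[m - j] ((fwdDiff 1) g) n
        = ∑ j ∈ Finset.range (m + 1),
          (m.choose j : ℝ) * (fwdDiff 1)^[j] f (n + (m + 1 - j)) * (fwdDiff 1)^[m + 1 - j] g n := by
      refine Finset.sum_congr rfl fun j hj => ?_
      have hjm : j ≤ m := Nat.lt_succ_iff.mp (Finset.mem_range.mp hj)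
      have e1 : n + (m - j) + 1 = n + (m + 1 - j) := by omega
      have e2 : m + 1 - j = (m - j) + 1 := by omega
      rw [fd_shift, e1, e2, Function.iterate_succ_apply]
    have h2 : ∑ j ∈ Finset.range (m + 1),
        (m.choose j : ℝ) * (fwdDiff 1)^[j] ((fwdDiff 1) f) (n + (m - j)) * (fwdDiff 1)^[m - j] g n
        = ∑ j ∈ Finset.range (m + 1),
          (m.choose j : ℝ) * (fwdDiff 1)^[j + 1] f (n + (m + 1 - (j + 1))) * (fwdDiff 1)^[m + 1 - (j + 1)] g n := by
      refine Finset.sum_congr rfl fun j hj => ?_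
      have hjm : j ≤ m := Nat.lt_succ_iff.mp (Finset.mem_range.mp hj)
      have e1 : m + 1 - (j + 1) = m - j := by omega
      rw [e1, Function.iterate_succ_apply]
    rw [h1, h2]
    set T : ℕ → ℝ := fun j => (fwdDiff 1)^[j] f (n + (m + 1 - j)) * (fwdDiff 1)^[m + 1 - j] g n with hT
    have key : ∑ j ∈ Finset.range (m + 1 + 1), ((m + 1).choose j : ℝ) * T j
        = ∑ j ∈ Finset.range (m + 1), (m.choose j : ℝ) * T j
          + ∑ j ∈ Finset.range (m + 1), (m.choose j : ℝ) * T (j + 1) := by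
      rw [Finset.sum_range_succ' (fun j => ((m + 1).choose j : ℝ) * T j),
          Finset.sum_range_succ' (fun j => ((m).choose j : ℝ) * T j)]
      have : ∀ i, ((m + 1).choose (i + 1) : ℝ) = (m.choose i : ℝ) + (m.choose (i + 1) : ℝ) := by
        intro i; rw [Nat.choose_succ_succ]; push_cast; ring
      simp only [this, add_mul, Finset.sum_add_distrib]
      have h0 : ∑ i ∈ Finset.range (m + 1), (m.choose (i + 1) : ℝ) * T (i + 1)
          = ∑ i ∈ Finset.range m, (m.choose (i + 1) : ℝ) * T (i + 1) := by
        rw [Finset.sum_range_succ, Nat.choose_succ_self]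
        simp
      rw [h0]
      simp [Nat.choose_zero_right]
      ring
    simp only [hT] at key
    simp only [mul_assoc]
    exact key.symm

lemma fd_high_zero (f : ℕ → ℝ) (m : ℕ) (H : ∀ n, (fwdDiff 1)^[m] f n = 0)
    (j : ℕ) (hj : m ≤ j) (n : ℕ) : (fwdDiff 1)^[j] f n = 0 := by
  have hf : (fwdDiff 1)^[m] f = fun _ => (0 : ℝ) := funext H
  have e : j - m + m = j := Nat.sub_add_cancel hj
  rw [← e, Function.iterate_add_apply, hf, fd_eval]
  simp

lemma fd_const_of (f : ℕ → ℝ) (k : ℕ) (H : ∀ n, (fwdDiff 1)^[k + 1] f n = 0) (n : ℕ) :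
    (fwdDiff 1)^[k] f n = (fwdDiff 1)^[k] f 0 := by
  induction n with
  | zero => rfl
  | succ n ih =>
    have h1 : (fwdDiff 1) ((fwdDiff 1)^[k] f) n = 0 := by
      have := H n
      rwa [Function.iterate_succ_apply'] at this
    have : (fwdDiff 1)^[k] f (n + 1) - (fwdDiff 1)^[k] f n = 0 := h1
    have := sub_eq_zero.mp this
    rw [this, ih]

lemma strict_const_ne (f : ℕ → ℝ) (k : ℕ) (hf0 : 0 < f 0)
    (hs : IsAPOfStrictOrder f k) : (∀ n, (fwdDiff 1)^[k] f n = (fwdDiff 1)^[k] f 0)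
      ∧ (fwdDiff 1)^[k] f 0 ≠ 0 := by
  obtain ⟨h1, h2⟩ := hs
  have hF : ∀ n, (fwdDiff 1)^[k + 1] f n = 0 := (order_iff f k).mp h1
  refine ⟨fd_const_of f k hF, ?_⟩
  rcases h2 with rfl | h2
  · simpa using hf0.ne'
  · rcases Nat.eq_zero_or_pos k with rfl | hk
    · simpa using hf0.ne'
    · intro hc0
      apply h2
      rw [order_iff]
      intro n
      have e : k - 1 + 1 = k := by omega
      rw [e, fd_const_of f k hF n, hc0]

theorem stmt_13 (a : ℕ → ℝ) (hpos : ∀ n, 0 < a n) (q r : ℝ) (hq : 0 < q) (hr : 0 < r)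
    (k h : ℕ)
    (haq : IsAPOfStrictOrder (fun n => a n ^ q) k)
    (har : IsAPOfStrictOrder (fun n => a n ^ r) h) :
    IsAPOfStrictOrder (fun n => a n ^ (q + r)) (k + h) := by
  set F : ℕ → ℝ := fun n => a n ^ q with hF
  set G : ℕ → ℝ := fun n => a n ^ r with hG
  have hFG : (fun n => a n ^ (q + r)) = F * G := by
    funext n
    simp only [hF, hG, Pi.mul_apply]
    exact Real.rpow_add (hpos n) q r
  have hFo : ∀ n, (fwdDiff 1)^[k + 1] F n = 0 := (order_iff F k).mp haq.1
  have hGo : ∀ n, (fwdDiff 1)^[h + 1] G n = 0 := (order_iff G h).mp har.1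
  obtain ⟨hFc, hFne⟩ := strict_const_ne F k (Real.rpow_pos_of_pos (hpos 0) q) haq
  obtain ⟨hGc, hGne⟩ := strict_const_ne G h (Real.rpow_pos_of_pos (hpos 0) r) har
  constructor
  · rw [order_iff, hFG]
    intro n
    rw [fd_leibniz]
    apply Finset.sum_eq_zero
    intro j hj
    by_cases hjk : k + 1 ≤ j
    · rw [fd_high_zero F (k + 1) hFo j hjk]; ring
    · have hjh : h + 1 ≤ k + h + 1 - j := by omega
      rw [fd_high_zero G (h + 1) hGo _ hjh]; ring
  · rcases Nat.eq_zero_or_pos (k + h) with h0 | hpos'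
    · left; exact h0
    · right
      intro Hcon
      have hcon := (order_iff _ (k + h - 1)).mp Hcon 0
      have e : k + h - 1 + 1 = k + h := by omega
      rw [e, hFG, fd_leibniz] at hcon
      rw [Finset.sum_eq_single k] at hcon
      · have e2 : k + h - k = h := by omega
        rw [e2, zero_add, hFc h] at hcon
        have hC : (0 : ℝ) < ((k + h).choose k : ℝ) := by
          exact_mod_cast Nat.choose_pos (Nat.le_add_right k h)
        exact (mul_ne_zero (mul_ne_zero hC.ne' hFne) hGne) hcon
      · intro j hj hjk
        rcases Nat.lt_or_ge j k with hlt | hge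
        · have hjh : h + 1 ≤ k + h - j := by omega
          rw [fd_high_zero G (h + 1) hGo _ hjh]; ring
        · have hjk' : k + 1 ≤ j := by omega
          rw [fd_high_zero F (k + 1) hFo j hjk']; ring
      · intro hk
        exact absurd (Finset.mem_range.mpr (by omega)) hk
end

section
/- Let a : ℕ → ℝ be a positive sequence, let q, r > 0 be real numbers and k, h ≥ 0 integers. If a^q is an arithmetic progression of strict order k and a^r is an arithmetic progression of strict order h, then r·k = h·q (as real numbers, with k and h cast to ℝ). -/
open Finset Filter Polynomial Real


lemma fwdDiff_iter_eq_apsum (b : ℕ → ℝ) (m n : ℕ) :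
    (fwdDiff 1)^[m + 1] b n
      = ∑ k ∈ Finset.range (m + 2), (-1 : ℝ) ^ (m + 1 - k) * ((m + 1).choose k) * b (n + k) := by
  rw [fwdDiff_iter_eq_sum_shift]
  refine Finset.sum_congr rfl fun k hk => ?_
  push_cast [zsmul_eq_mul, smul_eq_mul]
  ring_nf

lemma isAPOfOrder_iff (b : ℕ → ℝ) (m : ℕ) :
    IsAPOfOrder b m ↔ ∀ n, (fwdDiff 1)^[m + 1] b n = 0 := by
  unfold IsAPOfOrder
  simp_rw [fwdDiff_iter_eq_apsum]

lemma const_of_fwdDiff (c : ℕ → ℝ) (hc : ∀ n, fwdDiff 1 c n = 0) : ∀ n, c n = c 0 := by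
  intro n
  induction n with
  | zero => rfl
  | succ n ih =>
    have := hc n
    simp only [fwdDiff] at this
    have : c (n + 1) = c n := by linarith
    rw [this, ih]

lemma fwdDiff_iter_zero_fun (i : ℕ) : (fwdDiff (1:ℕ))^[i] (fun _ => (0:ℝ)) = fun _ => 0 := by
  induction i with
  | zero => rfl
  | succ i ih => rw [Function.iterate_succ_apply, show fwdDiff (1:ℕ) (fun _ => (0:ℝ)) = fun _ => 0 by funext n; simp [fwdDiff], ih]

lemma fwdDiff_vanish (b : ℕ → ℝ) (m : ℕ) (hv : ∀ n, (fwdDiff 1)^[m + 1] b n = 0)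
    {j : ℕ} (hj : m + 1 ≤ j) : ∀ n, (fwdDiff 1)^[j] b n = 0 := by
  obtain ⟨i, rfl⟩ := Nat.exists_eq_add_of_le hj
  intro n
  rw [add_comm, Function.iterate_add_apply, show (fwdDiff (1:ℕ))^[m+1] b = fun _ => (0:ℝ) from funext hv, fwdDiff_iter_zero_fun]

lemma newton_rep (b : ℕ → ℝ) (m : ℕ) (hv : ∀ n, (fwdDiff 1)^[m + 1] b n = 0) (n : ℕ) :
    b n = ∑ i ∈ Finset.range (m + 1), ((fwdDiff 1)^[i] b 0) * (n.choose i : ℝ) := by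
  have H := shift_eq_sum_fwdDiff_iter 1 b n 0
  simp only [zero_add, nsmul_eq_mul, smul_eq_mul, mul_one] at H
  rw [H]
  have key : ∀ (s : Finset ℕ), s ⊆ Finset.range (n + m + 2) →
      (∀ i ∈ Finset.range (n + m + 2), i ∉ s → (n.choose i : ℝ) * ((fwdDiff 1)^[i] b 0) = 0) →
      ∑ i ∈ s, (n.choose i : ℝ) * ((fwdDiff 1)^[i] b 0)
        = ∑ i ∈ Finset.range (n + m + 2), (n.choose i : ℝ) * ((fwdDiff 1)^[i] b 0) :=
    fun s hs hzero => Finset.sum_subset hs hzero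
  have e1 := key (Finset.range (n + 1)) (by gcongr <;> omega) (by
    intro i hi his
    simp only [Finset.mem_range] at hi his
    have : n < i := by omega
    rw [Nat.choose_eq_zero_of_lt this]
    simp)
  have e2 := key (Finset.range (m + 1)) (by gcongr <;> omega) (by
    intro i hi his
    simp only [Finset.mem_range] at hi his
    rw [fwdDiff_vanish b m hv (by omega) 0]
    simp)
  rw [e1, ← e2]
  exact Finset.sum_congr rfl fun i _ => mul_comm _ _

lemma exists_poly (b : ℕ → ℝ) (m : ℕ) (hv : ∀ n, (fwdDiff 1)^[m + 1] b n = 0)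
    (hc : (fwdDiff 1)^[m] b 0 ≠ 0) :
    ∃ P : Polynomial ℝ, P.natDegree = m ∧ ∀ n : ℕ, b n = P.eval (n : ℝ) := by
  set c : ℕ → ℝ := fun i => (fwdDiff 1)^[i] b 0 with hc_def
  refine ⟨∑ i ∈ Finset.range (m + 1), Polynomial.C (c i / (i.factorial : ℝ)) * descPochhammer ℝ i,
    ?_, ?_⟩
  · have hle : (∑ i ∈ Finset.range (m + 1),
        Polynomial.C (c i / (i.factorial : ℝ)) * descPochhammer ℝ i).natDegree ≤ m := by
      refine Polynomial.natDegree_sum_le_of_forall_le _ _ fun i hi => ?_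
      refine (Polynomial.natDegree_C_mul_le _ _).trans ?_
      rw [descPochhammer_natDegree]
      exact Nat.lt_succ_iff.mp (Finset.mem_range.mp hi)
    have hcoeff : (∑ i ∈ Finset.range (m + 1),
        Polynomial.C (c i / (i.factorial : ℝ)) * descPochhammer ℝ i).coeff m
          = c m / (m.factorial : ℝ) := by
      rw [Polynomial.finset_sum_coeff, Finset.sum_eq_single m]
      · rw [Polynomial.coeff_C_mul]
        have : (descPochhammer ℝ m).coeff m = 1 := by
          have := (monic_descPochhammer ℝ m)
          rw [Polynomial.Monic.def, Polynomial.leadingCoeff, descPochhammer_natDegree] at this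
          exact this
        rw [this, mul_one]
      · intro i hi hne
        rw [Polynomial.coeff_C_mul, Polynomial.coeff_eq_zero_of_natDegree_lt, mul_zero]
        rw [descPochhammer_natDegree]
        exact lt_of_le_of_ne (Nat.lt_succ_iff.mp (Finset.mem_range.mp hi)) hne
      · intro hm; exact absurd (Finset.self_mem_range_succ m) hm
    have hne : c m / (m.factorial : ℝ) ≠ 0 :=
      div_ne_zero hc (Nat.cast_ne_zero.mpr m.factorial_ne_zero)
    exact le_antisymm hle (Polynomial.le_natDegree_of_ne_zero (hcoeff ▸ hne))
  · intro n
    rw [newton_rep b m hv n, Polynomial.eval_finset_sum]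
    refine Finset.sum_congr rfl fun i _ => ?_
    rw [Polynomial.eval_mul, Polynomial.eval_C, descPochhammer_eval_eq_descFactorial,
      Nat.descFactorial_eq_factorial_mul_choose]
    push_cast
    field_simp
    ring

lemma key_tendsto (b : ℕ → ℝ) (m : ℕ) (hpos : ∀ n, 0 < b n)
    (hstrict : IsAPOfStrictOrder b m) :
    ∃ L : ℝ, 0 < L ∧ Tendsto (fun n : ℕ => b n / (n : ℝ) ^ (m : ℝ)) atTop (nhds L) := by
  obtain ⟨hord, hstr⟩ := hstrict
  rw [isAPOfOrder_iff] at hord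
  have hc : (fwdDiff 1)^[m] b 0 ≠ 0 := by
    rcases hstr with hm0 | hnot
    · subst hm0; exact (hpos 0).ne'
    · obtain ⟨m', rfl⟩ : ∃ m', m = m' + 1 := by
        rcases Nat.eq_zero_or_pos m with h0 | h0
        · subst h0
          exact absurd ((isAPOfOrder_iff b 0).mpr hord) hnot
        · exact ⟨m - 1, (Nat.succ_pred_eq_of_pos h0).symm⟩
      rw [show m' + 1 - 1 = m' from rfl, isAPOfOrder_iff] at hnot
      push_neg at hnot
      obtain ⟨n, hn⟩ := hnot
      have hconst : ∀ j, (fwdDiff 1)^[m' + 1] b j = (fwdDiff 1)^[m' + 1] b 0 := by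
        refine const_of_fwdDiff _ fun j => ?_
        have := hord j
        rwa [Function.iterate_succ_apply'] at this
      intro h0
      exact hn ((hconst n).trans h0)
  obtain ⟨P, hdeg, heval⟩ := exists_poly b m hord hc
  have hPne : P ≠ 0 := by
    intro h0
    have := heval 0
    rw [h0] at this
    simp at this
    exact absurd this (hpos 0).ne'
  have hlead : P.leadingCoeff ≠ 0 := Polynomial.leadingCoeff_ne_zero.mpr hPne
  -- eval x P / x ^ m → leadingCoeff
  have hequiv := Polynomial.isEquivalent_atTop_lead P
  have hev : ∀ᶠ x : ℝ in atTop, P.leadingCoeff * x ^ P.natDegree ≠ 0 := by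
    filter_upwards [eventually_gt_atTop (0:ℝ)] with x hx
    exact mul_ne_zero hlead (pow_ne_zero _ hx.ne')
  have h1 : Tendsto (fun x : ℝ => P.eval x / (P.leadingCoeff * x ^ P.natDegree)) atTop (nhds 1) :=
    (Asymptotics.isEquivalent_iff_tendsto_one hev).mp hequiv
  have h2 : Tendsto (fun x : ℝ => P.eval x / x ^ P.natDegree) atTop (nhds P.leadingCoeff) := by
    have := h1.const_mul P.leadingCoeff
    rw [mul_one] at this
    refine this.congr' ?_
    filter_upwards [eventually_gt_atTop (0:ℝ)] with x hx
    field_simp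
  have h3 : Tendsto (fun n : ℕ => b n / (n : ℝ) ^ (m : ℝ)) atTop (nhds P.leadingCoeff) := by
    have := h2.comp (tendsto_natCast_atTop_atTop (R := ℝ))
    refine this.congr fun n => ?_
    simp only [Function.comp_apply, heval n, hdeg, Real.rpow_natCast]
  refine ⟨P.leadingCoeff, ?_, h3⟩
  have hge : 0 ≤ P.leadingCoeff := by
    refine ge_of_tendsto h3 ?_
    filter_upwards [eventually_gt_atTop 0] with n hn
    exact div_nonneg (hpos n).le (Real.rpow_nonneg (Nat.cast_nonneg n) _)
  exact lt_of_le_of_ne hge (Ne.symm hlead)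

lemma lim_zero (f : ℕ → ℝ) {c d L M : ℝ} (hcd : c < d)
    (h1 : Tendsto (fun n : ℕ => f n / (n : ℝ) ^ c) atTop (nhds L))
    (h2 : Tendsto (fun n : ℕ => f n / (n : ℝ) ^ d) atTop (nhds M)) : M = 0 := by
  have hz : Tendsto (fun n : ℕ => ((n : ℝ)) ^ (c - d)) atTop (nhds 0) := by
    have := (tendsto_rpow_neg_atTop (y := d - c) (by linarith)).comp
      (tendsto_natCast_atTop_atTop (R := ℝ))
    refine this.congr fun n => ?_
    simp [Function.comp_apply, neg_sub]
  have hprod : Tendsto (fun n : ℕ => f n / (n : ℝ) ^ c * (n : ℝ) ^ (c - d)) atTop (nhds (L * 0)) :=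
    h1.mul hz
  rw [mul_zero] at hprod
  have : Tendsto (fun n : ℕ => f n / (n : ℝ) ^ d) atTop (nhds 0) := by
    refine hprod.congr' ?_
    filter_upwards [eventually_gt_atTop 0] with n hn
    have hn' : (0:ℝ) < (n:ℝ) := by exact_mod_cast hn
    rw [Real.rpow_sub hn']
    have hc0 : (n:ℝ) ^ c ≠ 0 := (Real.rpow_pos_of_pos hn' c).ne'
    field_simp
  exact tendsto_nhds_unique h2 this

theorem stmt_14 (a : ℕ → ℝ) (hpos : ∀ n, 0 < a n) (q r : ℝ) (hq : 0 < q) (hr : 0 < r)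
    (k h : ℕ)
    (haq : IsAPOfStrictOrder (fun n => a n ^ q) k)
    (har : IsAPOfStrictOrder (fun n => a n ^ r) h) :
    r * (k : ℝ) = (h : ℝ) * q := by
  obtain ⟨L, hL, hLt⟩ := key_tendsto _ k (fun n => Real.rpow_pos_of_pos (hpos n) q) haq
  obtain ⟨M, hM, hMt⟩ := key_tendsto _ h (fun n => Real.rpow_pos_of_pos (hpos n) r) har
  -- f n = a n ^ (q * r)
  set f : ℕ → ℝ := fun n => a n ^ (q * r) with hf
  have hT1 : Tendsto (fun n : ℕ => f n / (n : ℝ) ^ ((k : ℝ) * r)) atTop (nhds (L ^ r)) := by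
    have := hLt.rpow_const (p := r) (Or.inr hr.le)
    refine this.congr fun n => ?_
    rw [Real.div_rpow (Real.rpow_pos_of_pos (hpos n) q).le
        (Real.rpow_nonneg (Nat.cast_nonneg n) _),
      ← Real.rpow_mul (hpos n).le, ← Real.rpow_mul (Nat.cast_nonneg n)]
  have hT2 : Tendsto (fun n : ℕ => f n / (n : ℝ) ^ ((h : ℝ) * q)) atTop (nhds (M ^ q)) := by
    have := hMt.rpow_const (p := q) (Or.inr hq.le)
    refine this.congr fun n => ?_
    rw [Real.div_rpow (Real.rpow_pos_of_pos (hpos n) r).le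
        (Real.rpow_nonneg (Nat.cast_nonneg n) _),
      ← Real.rpow_mul (hpos n).le, ← Real.rpow_mul (Nat.cast_nonneg n), hf]
    simp only []
    rw [mul_comm r q]
  have heq : (k : ℝ) * r = (h : ℝ) * q := by
    by_contra hne
    rcases lt_or_gt_of_ne hne with hlt | hgt
    · exact absurd (lim_zero f hlt hT1 hT2) (Real.rpow_pos_of_pos hM q).ne'
    · exact absurd (lim_zero f hgt hT2 hT1) (Real.rpow_pos_of_pos hL r).ne'
  linarith
end

section
/- Let a : ℕ → ℝ be a non-constant positive sequence, let q, r > 0 be real numbers and k, h ≥ 1 integers. If a^q is an arithmetic progression of strict order k and a^r is an arithmetic progression of strict order h, then a^t is an arithmetic progression of strict order d, where d = gcd(k, h) and t = q·d/k (which also equals r·d/h). -/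
namespace StmtAux

open Polynomial Finset Filter Asymptotics Real

lemma isAPOfOrder_iff (b : ℕ → ℝ) (m : ℕ) :
    IsAPOfOrder b m ↔ ∀ n, (fwdDiff 1)^[m+1] b n = 0 := by
  unfold IsAPOfOrder
  refine forall_congr' fun n => ?_
  rw [fwdDiff_iter_eq_sum_shift]
  have : ∀ i ∈ Finset.range (m+2),
      ((-1 : ℤ) ^ (m + 1 - i) * ((m+1).choose i)) • b (n + i • 1)
      = (-1 : ℝ) ^ (m + 1 - i) * ((m + 1).choose i) * b (n + i) := by
    intro i hi
    rw [zsmul_eq_mul, smul_eq_mul, mul_one]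
    push_cast
    ring
  rw [Finset.sum_congr rfl this]

lemma fwdDiff_eval (p : ℝ[X]) :
    fwdDiff 1 (fun n : ℕ => p.eval (n : ℝ)) = fun n : ℕ => (p.comp (X + 1) - p).eval (n : ℝ) := by
  funext n
  simp [fwdDiff, eval_comp]

lemma natDegree_comp_sub (p : ℝ[X]) (m : ℕ) (hp : p.natDegree ≤ m + 1) :
    (p.comp (X + 1) - p).natDegree ≤ m := by
  rcases eq_or_ne (p.comp (X + 1) - p) 0 with h0 | h0
  · simp [h0]
  have hpne : p ≠ 0 := by rintro rfl; simp at h0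
  have hq1 : (X + 1 : ℝ[X]).natDegree = 1 := by
    simpa using natDegree_X_add_C (1 : ℝ)
  have hlc : (p.comp (X + 1)).leadingCoeff = p.leadingCoeff := by
    rw [leadingCoeff_comp (by rw [hq1]; exact one_ne_zero)]
    have : (X + 1 : ℝ[X]).leadingCoeff = 1 := by
      simpa using (monic_X_add_C (1 : ℝ)).leadingCoeff
    rw [this, one_pow, mul_one]
  have hcne : p.comp (X + 1) ≠ 0 := fun hzz => hpne (leadingCoeff_eq_zero.mp
    (by rw [← hlc, hzz, leadingCoeff_zero]))
  have hdeg : (p.comp (X + 1)).degree = p.degree := by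
    rw [degree_eq_natDegree hcne, degree_eq_natDegree hpne, natDegree_comp, hq1, mul_one]
  have hlt := degree_sub_lt hdeg hcne hlc
  have h2 : (p.comp (X + 1)).natDegree = p.natDegree := by
    rw [natDegree_comp, hq1, mul_one]
  have := natDegree_lt_natDegree h0 hlt
  omega

lemma poly_to_order (m : ℕ) (p : ℝ[X]) (hp : p.natDegree ≤ m) :
    ∀ n, (fwdDiff 1)^[m+1] (fun n : ℕ => p.eval (n : ℝ)) n = 0 := by
  induction m generalizing p with
  | zero =>
    have hc := eq_C_of_natDegree_le_zero hp
    intro n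
    rw [hc]; simp [fwdDiff]
  | succ m ih =>
    intro n
    rw [Function.iterate_succ_apply, fwdDiff_eval]
    exact ih _ (natDegree_comp_sub p m hp) n

lemma iter_fwdDiff_zero (j : ℕ) (n : ℕ) : (fwdDiff (1:ℕ))^[j] (fun _ => (0:ℝ)) n = 0 := by
  rw [fwdDiff_iter_eq_sum_shift]
  simp

lemma order_to_poly (b : ℕ → ℝ) (m : ℕ) (hb : ∀ n, (fwdDiff 1)^[m+1] b n = 0) :
    ∃ p : ℝ[X], p.natDegree ≤ m ∧ ∀ n, b n = p.eval (n : ℝ) := by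
  set c : ℕ → ℝ := fun k => (fwdDiff 1)^[k] b 0 with hc
  have hck : ∀ k, m + 1 ≤ k → c k = 0 := by
    intro k hk
    have hkk : k = (k - (m+1)) + (m+1) := by omega
    rw [hc]
    simp only
    rw [hkk, Function.iterate_add_apply]
    have hz : (fwdDiff (1:ℕ))^[m+1] b = fun _ => (0:ℝ) := funext hb
    rw [hz]
    exact iter_fwdDiff_zero _ _
  refine ⟨∑ k ∈ range (m+1), C (c k / k.factorial) * descPochhammer ℝ k, ?_, ?_⟩
  · apply natDegree_sum_le_of_forall_le
    intro i hi
    apply le_trans (natDegree_C_mul_le _ _)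
    rw [descPochhammer_natDegree]
    exact Nat.lt_succ_iff.mp (mem_range.mp hi)
  · intro n
    have hnewton := shift_eq_sum_fwdDiff_iter (1:ℕ) b n 0
    simp only [zero_add, smul_eq_mul, mul_one] at hnewton
    rw [hnewton]
    rw [eval_finset_sum]
    have heval : ∀ k ∈ range (m+1), (C (c k / k.factorial) * descPochhammer ℝ k).eval (n:ℝ)
        = (n.choose k : ℝ) * c k := by
      intro k _
      rw [eval_mul, eval_C, descPochhammer_eval_eq_descFactorial,
        Nat.descFactorial_eq_factorial_mul_choose]
      push_cast
      field_simp
    rw [Finset.sum_congr rfl heval]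
    have h1 : ∑ k ∈ range (n+1), n.choose k • ((fwdDiff 1)^[k] b 0)
        = ∑ k ∈ range (max n m + 1), n.choose k • ((fwdDiff 1)^[k] b 0) := by
      apply Finset.sum_subset (range_subset_range.2 (by omega))
      intro x _ hx
      rw [mem_range, not_lt] at hx
      rw [Nat.choose_eq_zero_of_lt (by omega)]
      simp
    have h2 : ∑ k ∈ range (m+1), (n.choose k : ℝ) * c k
        = ∑ k ∈ range (max n m + 1), (n.choose k : ℝ) * c k := by
      apply Finset.sum_subset (range_subset_range.2 (by omega))
      intro x _ hx
      rw [mem_range, not_lt] at hx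
      rw [hck x (by omega)]
      simp
    rw [h2, h1]
    refine Finset.sum_congr rfl fun i _ => ?_
    simp [hc, nsmul_eq_mul]

lemma poly_eq_of_eval_nat (p q : ℝ[X]) (hpq : ∀ n : ℕ, p.eval (n:ℝ) = q.eval (n:ℝ)) : p = q := by
  apply eq_of_infinite_eval_eq
  apply Set.Infinite.mono (s := Set.range ((↑) : ℕ → ℝ))
  · rintro x ⟨n, rfl⟩; exact hpq n
  · exact Set.infinite_range_of_injective Nat.cast_injective

lemma strict_of_poly (b : ℕ → ℝ) (m : ℕ) (hm : 1 ≤ m) (p : ℝ[X]) (hdeg : p.natDegree = m)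
    (hb : ∀ n, b n = p.eval (n:ℝ)) : IsAPOfStrictOrder b m := by
  have hbe : b = fun n : ℕ => p.eval (n:ℝ) := funext hb
  constructor
  · rw [isAPOfOrder_iff, hbe]
    exact poly_to_order m p hdeg.le
  · right
    intro hcon
    rw [isAPOfOrder_iff] at hcon
    obtain ⟨p', hp'deg, hp'⟩ := order_to_poly b (m-1) hcon
    have : p = p' := poly_eq_of_eval_nat p p' fun n => by rw [← hb n, ← hp' n]
    rw [this] at hdeg
    omega

lemma poly_of_strict (b : ℕ → ℝ) (m : ℕ) (hm : 1 ≤ m) (hs : IsAPOfStrictOrder b m) :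
    ∃ p : ℝ[X], p.natDegree = m ∧ ∀ n, b n = p.eval (n:ℝ) := by
  obtain ⟨p, hdeg, hp⟩ := order_to_poly b m ((isAPOfOrder_iff b m).mp hs.1)
  refine ⟨p, ?_, hp⟩
  rcases hs.2 with h0 | hns
  · omega
  by_contra hne
  apply hns
  rw [isAPOfOrder_iff]
  have hbe : b = fun n : ℕ => p.eval (n:ℝ) := funext hp
  rw [hbe]
  exact poly_to_order (m-1) p (by omega)

lemma tendsto_eval_div (p : ℝ[X]) (hp : p ≠ 0) :
    Tendsto (fun n : ℕ => p.eval (n:ℝ) / (n:ℝ) ^ p.natDegree) atTop (nhds p.leadingCoeff) := by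
  have h1 := p.isEquivalent_atTop_lead
  have h2 : ∀ᶠ x : ℝ in atTop, p.leadingCoeff * x ^ p.natDegree ≠ 0 := by
    filter_upwards [eventually_gt_atTop 0] with x hx
    exact mul_ne_zero (leadingCoeff_ne_zero.mpr hp) (by positivity)
  have h3 := (isEquivalent_iff_tendsto_one h2).mp h1
  have h4 : Tendsto (fun x : ℝ => p.eval x / x ^ p.natDegree) atTop (nhds p.leadingCoeff) := by
    have := h3.const_mul p.leadingCoeff
    rw [mul_one] at this
    apply this.congr'
    filter_upwards [eventually_gt_atTop 0] with x hx
    have hl : p.leadingCoeff ≠ 0 := leadingCoeff_ne_zero.mpr hp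
    have hxd : x ^ p.natDegree ≠ 0 := by positivity
    simp only [Pi.div_apply]
    field_simp
  exact h4.comp tendsto_natCast_atTop_atTop

lemma lc_pos (P : ℝ[X]) (hP : ∀ n : ℕ, 0 < P.eval (n:ℝ)) : 0 < P.leadingCoeff := by
  have hPne : P ≠ 0 := by
    intro hz; have := hP 0; rw [hz] at this; simp at this
  have ht := tendsto_eval_div P hPne
  have hle : 0 ≤ P.leadingCoeff :=
    ge_of_tendsto' ht fun n => div_nonneg (hP n).le (by positivity)
  have hne : P.leadingCoeff ≠ 0 := leadingCoeff_ne_zero.mpr hPne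
  exact hle.lt_of_ne (Ne.symm hne)

lemma exponent_eq (P Q : ℝ[X]) (a : ℕ → ℝ) (hpos : ∀ n, 0 < a n)
    (q r : ℝ) (hq : 0 < q) (hr : 0 < r)
    (hP : ∀ n : ℕ, P.eval (n:ℝ) = a n ^ q) (hQ : ∀ n : ℕ, Q.eval (n:ℝ) = a n ^ r) :
    (P.natDegree : ℝ) * r = (Q.natDegree : ℝ) * q := by
  have hPpos : ∀ n : ℕ, 0 < P.eval (n:ℝ) := fun n => (hP n) ▸ rpow_pos_of_pos (hpos n) q
  have hQpos : ∀ n : ℕ, 0 < Q.eval (n:ℝ) := fun n => (hQ n) ▸ rpow_pos_of_pos (hpos n) r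
  have hlcP := lc_pos P hPpos
  have hlcQ := lc_pos Q hQpos
  have hPne : P ≠ 0 := fun hz => by simpa [hz] using hPpos 0
  have hQne : Q ≠ 0 := fun hz => by simpa [hz] using hQpos 0
  set k := P.natDegree with hkdef
  set h := Q.natDegree with hhdef
  have hQP : ∀ n : ℕ, Q.eval (n:ℝ) = (P.eval (n:ℝ)) ^ (r/q) := by
    intro n
    rw [hQ, hP, ← Real.rpow_mul (hpos n).le]
    congr 1
    field_simp
  set e : ℝ := (h:ℝ) - k * (r/q) with hedef
  have T1 := tendsto_eval_div P hPne
  have T2 : Tendsto (fun n : ℕ => (P.eval (n:ℝ) / (n:ℝ)^k)^(r/q)) atTop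
      (nhds (P.leadingCoeff ^ (r/q))) := T1.rpow_const (Or.inl hlcP.ne')
  have T3 := tendsto_eval_div Q hQne
  have T4 : Tendsto (fun n : ℕ => (n:ℝ) ^ e) atTop
      (nhds (P.leadingCoeff ^ (r/q) / Q.leadingCoeff)) := by
    apply (T2.div T3 hlcQ.ne').congr'
    filter_upwards [eventually_ge_atTop 1] with n hn
    have hx : (0:ℝ) < (n:ℝ) := by exact_mod_cast Nat.lt_of_lt_of_le Nat.zero_lt_one hn
    simp only [Pi.div_apply]
    rw [div_rpow (hPpos n).le (by positivity), ← hQP n]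
    rw [← Real.rpow_natCast (n:ℝ) k, ← Real.rpow_mul hx.le,
      ← Real.rpow_natCast (n:ℝ) Q.natDegree, ← hhdef]
    rw [div_div_div_comm, div_self (hQpos n).ne', ← Real.rpow_sub hx]
    rw [one_div, ← Real.rpow_neg hx.le]
    rw [hedef]
    congr 1
    ring
  have he : e = 0 := by
    rcases lt_trichotomy e 0 with he | he | he
    · have T5 : Tendsto (fun n : ℕ => (n:ℝ) ^ e) atTop (nhds 0) := by
        have := (tendsto_rpow_neg_atTop (y := -e) (by linarith)).comp
          tendsto_natCast_atTop_atTop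
        simpa [Function.comp_def, neg_neg] using this
      have := tendsto_nhds_unique T4 T5
      exact absurd this (div_pos (rpow_pos_of_pos hlcP _) hlcQ).ne'
    · exact he
    · have T5 : Tendsto (fun n : ℕ => (n:ℝ) ^ e) atTop atTop :=
        (tendsto_rpow_atTop he).comp tendsto_natCast_atTop_atTop
      exact absurd T5 (T4.not_tendsto (disjoint_nhds_atTop _))
  have : (h:ℝ) = k * (r/q) := by
    have := hedef ▸ he
    linarith [this]
  field_simp at this
  linarith

lemma bezout_nat (k' h' : ℕ) (hk : 0 < k') (hh : 0 < h') (hcop : Nat.Coprime k' h') :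
    ∃ u v : ℕ, u * k' = v * h' + 1 := by
  have hg : Nat.gcd k' h' = 1 := hcop
  have hb : (k' : ℤ) * Nat.gcdA k' h' + (h' : ℤ) * Nat.gcdB k' h' = 1 := by
    rw [← Nat.gcd_eq_gcd_ab, hg]; norm_num
  set A := Nat.gcdA k' h'
  set B := Nat.gcdB k' h'
  set m : ℤ := |A| + |B| + 1 with hm
  have hu0 : 0 ≤ A + m * h' := by
    have h1 : (1:ℤ) ≤ h' := by exact_mod_cast hh
    nlinarith [abs_nonneg A, abs_nonneg B, neg_abs_le A]
  have hv0 : 0 ≤ m * k' - B := by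
    have h1 : (1:ℤ) ≤ k' := by exact_mod_cast hk
    nlinarith [abs_nonneg A, abs_nonneg B, le_abs_self B]
  refine ⟨(A + m * h').toNat, (m * k' - B).toNat, ?_⟩
  have hu : ((A + m * h').toNat : ℤ) = A + m * h' := Int.toNat_of_nonneg hu0
  have hv : ((m * k' - B).toNat : ℤ) = m * k' - B := Int.toNat_of_nonneg hv0
  have : ((A + m * h').toNat : ℤ) * k' = ((m * k' - B).toNat : ℤ) * h' + 1 := by
    rw [hu, hv]; linear_combination hb
  exact_mod_cast this

lemma root_extract (P Q : ℝ[X]) (k' h' : ℕ) (hk : 0 < k') (hh : 0 < h')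
    (hcop : Nat.Coprime k' h') (hPQ : P ^ h' = Q ^ k') (hPne : P ≠ 0) (hQne : Q ≠ 0) :
    ∃ R : ℝ[X], R ^ k' = P ∧ R ^ h' = Q := by
  obtain ⟨u, v, huv⟩ := bezout_nat k' h' hk hh hcop
  set K := FractionRing ℝ[X]
  set φ : ℝ[X] →+* K := algebraMap ℝ[X] K with hφ
  have hinj : Function.Injective φ := IsFractionRing.injective ℝ[X] K
  have hpb : φ P ≠ 0 := fun hz => hPne (hinj (by simpa using hz))
  have hqb : φ Q ≠ 0 := fun hz => hQne (hinj (by simpa using hz))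
  have hPQ' : (φ P) ^ h' = (φ Q) ^ k' := by
    rw [← map_pow, ← map_pow, hPQ]
  set s : K := φ P ^ u / φ Q ^ v with hs
  have key : ∀ w : ℕ, φ Q ^ (w * k') = φ P ^ (w * h') := by
    intro w
    rw [mul_comm w k', pow_mul, ← hPQ', ← pow_mul, mul_comm h' w]
  have hsk : s ^ k' = φ P := by
    have hne : ((φ Q ^ v) ^ k' : K) ≠ 0 := pow_ne_zero _ (pow_ne_zero _ hqb)
    rw [hs, div_pow, div_eq_iff hne, ← pow_mul (φ Q), key v, ← pow_mul, huv]
    ring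
  have keyQ : ∀ w : ℕ, φ P ^ (w * h') = φ Q ^ (w * k') := fun w => (key w).symm
  have hsh : s ^ h' = φ Q := by
    have hne : ((φ Q ^ v) ^ h' : K) ≠ 0 := pow_ne_zero _ (pow_ne_zero _ hqb)
    rw [hs, div_pow, div_eq_iff hne, ← pow_mul (φ P), keyQ u, ← pow_mul (φ Q), huv]
    ring
  have hint : IsIntegral ℝ[X] s := by
    apply IsIntegral.of_pow hk
    rw [hsk]
    exact isIntegral_algebraMap
  obtain ⟨R, hR⟩ := IsIntegrallyClosed.isIntegral_iff.mp hint
  refine ⟨R, hinj ?_, hinj ?_⟩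
  · rw [map_pow]; rw [show φ R = s from hR, hsk]
  · rw [map_pow]; rw [show φ R = s from hR, hsh]

end StmtAux

open StmtAux Polynomial Real in
theorem stmt_15 (a : ℕ → ℝ) (hpos : ∀ n, 0 < a n)
    (hnc : ¬ (∃ c : ℝ, ∀ n, a n = c))
    (q r : ℝ) (hq : 0 < q) (hr : 0 < r) (k h : ℕ) (hk : 1 ≤ k) (hh : 1 ≤ h)
    (haq : IsAPOfStrictOrder (fun n => a n ^ q) k)
    (har : IsAPOfStrictOrder (fun n => a n ^ r) h) :
    IsAPOfStrictOrder (fun n => a n ^ (q * (Nat.gcd k h : ℝ) / k)) (Nat.gcd k h) ∧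
      q * (Nat.gcd k h : ℝ) / k = r * (Nat.gcd k h : ℝ) / h := by
  obtain ⟨P, hPdeg, hP⟩ := poly_of_strict _ k hk haq
  obtain ⟨Q, hQdeg, hQ⟩ := poly_of_strict _ h hh har
  have hP' : ∀ n : ℕ, P.eval (n:ℝ) = a n ^ q := fun n => (hP n).symm
  have hQ' : ∀ n : ℕ, Q.eval (n:ℝ) = a n ^ r := fun n => (hQ n).symm
  have hkr : (k : ℝ) * r = (h : ℝ) * q := by
    have := exponent_eq P Q a hpos q r hq hr hP' hQ'
    rwa [hPdeg, hQdeg] at this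
  set d := Nat.gcd k h with hd
  have hdpos : 0 < d := Nat.gcd_pos_of_pos_left h (by omega)
  set k' := k / d with hk'
  set h' := h / d with hh'
  have hkd : k = d * k' := (Nat.div_mul_cancel (Nat.gcd_dvd_left k h)).symm.trans (mul_comm _ _)
  have hhd : h = d * h' := (Nat.div_mul_cancel (Nat.gcd_dvd_right k h)).symm.trans (mul_comm _ _)
  have hk'pos : 0 < k' := by
    rcases Nat.eq_zero_or_pos k' with h0 | h0
    · rw [h0, mul_zero] at hkd; omega
    · exact h0
  have hh'pos : 0 < h' := by
    rcases Nat.eq_zero_or_pos h' with h0 | h0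
    · rw [h0, mul_zero] at hhd; omega
    · exact h0
  have hcop : Nat.Coprime k' h' := Nat.coprime_div_gcd_div_gcd hdpos
  -- the exponent identity with k', h'
  have hkr' : (k' : ℝ) * r = (h' : ℝ) * q := by
    have hdr : (0:ℝ) < (d:ℝ) := by exact_mod_cast hdpos
    have h1 : ((d:ℝ) * k') * r = ((d:ℝ) * h') * q := by
      have hkc : (k:ℝ) = (d:ℝ) * k' := by exact_mod_cast congrArg (Nat.cast : ℕ → ℝ) hkd
      have hhc : (h:ℝ) = (d:ℝ) * h' := by exact_mod_cast congrArg (Nat.cast : ℕ → ℝ) hhd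
      rw [← hkc, ← hhc]; exact hkr
    apply mul_left_cancel₀ (a := (d:ℝ)) hdr.ne'
    linarith [h1]
  -- positivity of evals
  have hPpos : ∀ n : ℕ, 0 < P.eval (n:ℝ) := fun n => (hP' n) ▸ rpow_pos_of_pos (hpos n) q
  have hQpos : ∀ n : ℕ, 0 < Q.eval (n:ℝ) := fun n => (hQ' n) ▸ rpow_pos_of_pos (hpos n) r
  have hPne : P ≠ 0 := fun hz => by simpa [hz] using hPpos 0
  have hQne : Q ≠ 0 := fun hz => by simpa [hz] using hQpos 0
  -- P ^ h' = Q ^ k'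
  have hqh' : q * (h' : ℝ) = r * (k' : ℝ) := by linarith [hkr']
  have hPQ : P ^ h' = Q ^ k' := by
    apply poly_eq_of_eval_nat
    intro n
    rw [eval_pow, eval_pow, hP' n, hQ' n]
    rw [← Real.rpow_natCast (a n ^ q) h', ← Real.rpow_natCast (a n ^ r) k']
    rw [← Real.rpow_mul (hpos n).le, ← Real.rpow_mul (hpos n).le, hqh']
  obtain ⟨R, hRk, hRh⟩ := root_extract P Q k' h' hk'pos hh'pos hcop hPQ hPne hQne
  have hRdeg : R.natDegree = d := by
    have h1 : k' * R.natDegree = k' * d := by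
      rw [← natDegree_pow, hRk, hPdeg, hkd, mul_comm]
    exact Nat.eq_of_mul_eq_mul_left hk'pos h1
  -- positivity of R eval
  have hRpos : ∀ n : ℕ, 0 < R.eval (n:ℝ) := by
    have hodd : Odd k' ∨ Odd h' := by
      by_contra hcon
      push_neg at hcon
      obtain ⟨h1, h2⟩ := hcon
      rw [Nat.not_odd_iff_even] at h1 h2
      have : 2 ∣ Nat.gcd k' h' := Nat.dvd_gcd h1.two_dvd h2.two_dvd
      rw [hcop] at this
      omega
    intro n
    rcases hodd with ho | ho
    · have : 0 < R.eval (n:ℝ) ^ k' := by rw [← eval_pow, hRk]; exact hPpos n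
      exact (Odd.pow_pos_iff ho).mp this
    · have : 0 < R.eval (n:ℝ) ^ h' := by rw [← eval_pow, hRh]; exact hQpos n
      exact (Odd.pow_pos_iff ho).mp this
  -- the main pointwise identity
  have hkc : (k:ℝ) = (d:ℝ) * k' := by exact_mod_cast congrArg (Nat.cast : ℕ → ℝ) hkd
  have hk'ne : (k' : ℝ) ≠ 0 := by positivity
  have hdne : (d : ℝ) ≠ 0 := by
    have : (0:ℝ) < d := by exact_mod_cast hdpos
    exact this.ne'
  have hmain : ∀ n : ℕ, a n ^ (q * (d : ℝ) / k) = R.eval (n:ℝ) := by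
    intro n
    have h1 : q * (d:ℝ) / k = q * (1 / k') := by
      rw [hkc]; field_simp
    rw [h1, Real.rpow_mul (hpos n).le, ← hP' n, ← hRk, eval_pow]
    rw [← Real.rpow_natCast (R.eval (n:ℝ)) k', ← Real.rpow_mul (hRpos n).le]
    rw [mul_one_div, div_self hk'ne, Real.rpow_one]
  constructor
  · exact strict_of_poly _ d hdpos R hRdeg hmain
  · -- q * d / k = r * d / h
    have hkne : (k:ℝ) ≠ 0 := by positivity
    have hhne : (h:ℝ) ≠ 0 := by positivity
    field_simp
    linear_combination (-1:ℝ) * hkr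
end
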